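/- Suppose x^k ∈ ℝ^{n×p} satisfy ‖x^{k+1} − x̄^{k+1}‖ ≤ C(‖x^0‖ζ^{k+1} + B Σ_{j=0}^{k} α_j ζ^{k−j}) with 0 ≤ ζ < 1 and α_k ≥ 0. Then Σ_{k=0}^K α_k ‖x^{k+1} − x̄^{k+1}‖ ≤ D_1 + D_2 Σ_{k=0}^K α_k², where D_1 = C‖x^0‖ζ/(2(1−ζ)) and D_2 = C(‖x^0‖ζ/2 + B/(1−ζ)). -/
import Mathlib


/-- The Frobenius norm of a real matrix. -/
noncomputable def frob {m p : Type*} [Fintype m] [Fintype p] (A : Matrix m p ℝ) : ℝ :=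
  Real.sqrt (∑ i, ∑ j, (A i j) ^ 2)

private lemma geo_bound {ζ : ℝ} (hζ0 : 0 ≤ ζ) (hζ1 : ζ < 1) (m : ℕ) :
    ∑ i ∈ Finset.range m, ζ ^ i ≤ 1 / (1 - ζ) := by
  have h1 : 0 < 1 - ζ := by linarith
  rw [geom_sum_eq hζ1.ne]
  have e : (ζ ^ m - 1) / (ζ - 1) = (1 - ζ ^ m) / (1 - ζ) := by
    rw [div_eq_div_iff (by linarith) (by linarith)]; ring
  rw [e]
  gcongr
  have := pow_nonneg hζ0 m; linarith

theorem stmt18 {n p : ℕ} (hn : 0 < n)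
    (x : ℕ → Matrix (Fin n) (Fin p) ℝ)
    (xbar : ℕ → Matrix (Fin n) (Fin p) ℝ)
    (hxbar : ∀ k, xbar k = (Matrix.of fun _ _ : Fin n => (1 : ℝ) / n) * x k)
    (C B ζ : ℝ) (hC : 0 ≤ C) (hB : 0 ≤ B) (hζ0 : 0 ≤ ζ) (hζ1 : ζ < 1)
    (α : ℕ → ℝ) (hα : ∀ k, 0 ≤ α k)
    (hcons : ∀ k : ℕ, frob (x (k + 1) - xbar (k + 1))
      ≤ C * (frob (x 0) * ζ ^ (k + 1) + B * ∑ j ∈ Finset.range (k + 1), α j * ζ ^ (k - j)))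
    (K : ℕ) :
    ∑ k ∈ Finset.range (K + 1), α k * frob (x (k + 1) - xbar (k + 1))
      ≤ C * frob (x 0) * ζ / (2 * (1 - ζ)) +
        C * (frob (x 0) * ζ / 2 + B / (1 - ζ)) * ∑ k ∈ Finset.range (K + 1), (α k) ^ 2 := by
  set f0 := frob (x 0) with hf0def
  have hf0 : 0 ≤ f0 := Real.sqrt_nonneg _
  have h1ζ : 0 < 1 - ζ := by linarith
  set S2 := ∑ k ∈ Finset.range (K + 1), (α k) ^ 2 with hS2
  have hS2nn : 0 ≤ S2 := Finset.sum_nonneg fun k _ => sq_nonneg _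
  -- Step 1: apply hcons
  have step1 : ∑ k ∈ Finset.range (K + 1), α k * frob (x (k + 1) - xbar (k + 1))
      ≤ ∑ k ∈ Finset.range (K + 1),
          α k * (C * (f0 * ζ ^ (k + 1) + B * ∑ j ∈ Finset.range (k + 1), α j * ζ ^ (k - j))) :=
    Finset.sum_le_sum fun k _ => mul_le_mul_of_nonneg_left (hcons k) (hα k)
  -- Step 2: split the sum
  have step2 : ∑ k ∈ Finset.range (K + 1),
        α k * (C * (f0 * ζ ^ (k + 1) + B * ∑ j ∈ Finset.range (k + 1), α j * ζ ^ (k - j)))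
      = C * f0 * (∑ k ∈ Finset.range (K + 1), α k * ζ ^ (k + 1))
        + C * B * (∑ k ∈ Finset.range (K + 1), ∑ j ∈ Finset.range (k + 1),
            α k * α j * ζ ^ (k - j)) := by
    rw [Finset.mul_sum, Finset.mul_sum, ← Finset.sum_add_distrib]
    refine Finset.sum_congr rfl fun k _ => ?_
    have e1 : α k * (C * (f0 * ζ ^ (k + 1) + B * ∑ j ∈ Finset.range (k + 1), α j * ζ ^ (k - j)))
        = C * f0 * (α k * ζ ^ (k + 1))
          + C * B * (α k * ∑ j ∈ Finset.range (k + 1), α j * ζ ^ (k - j)) := by ring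
    rw [e1, Finset.mul_sum, Finset.mul_sum]
    congr 1
    rw [Finset.mul_sum]
    exact Finset.sum_congr rfl fun j _ => by ring
  -- Bound for first sum
  have h1 : ∑ k ∈ Finset.range (K + 1), α k * ζ ^ (k + 1)
      ≤ ζ / (2 * (1 - ζ)) + (ζ / 2) * S2 := by
    have hb : ∀ k ∈ Finset.range (K + 1), α k * ζ ^ (k + 1)
        ≤ (1 / 2) * ζ ^ (k + 1) + (1 / 2) * ((α k) ^ 2 * ζ ^ (k + 1)) := by
      intro k _
      have hz : (0:ℝ) ≤ ζ ^ (k + 1) := pow_nonneg hζ0 _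
      nlinarith [sq_nonneg (α k - 1)]
    calc ∑ k ∈ Finset.range (K + 1), α k * ζ ^ (k + 1)
        ≤ ∑ k ∈ Finset.range (K + 1),
            ((1 / 2) * ζ ^ (k + 1) + (1 / 2) * ((α k) ^ 2 * ζ ^ (k + 1))) :=
          Finset.sum_le_sum hb
      _ = (1 / 2) * ∑ k ∈ Finset.range (K + 1), ζ ^ (k + 1)
            + (1 / 2) * ∑ k ∈ Finset.range (K + 1), (α k) ^ 2 * ζ ^ (k + 1) := by
          rw [Finset.sum_add_distrib, Finset.mul_sum, Finset.mul_sum]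
      _ ≤ ζ / (2 * (1 - ζ)) + (ζ / 2) * S2 := by
          have e1 : ∑ k ∈ Finset.range (K + 1), ζ ^ (k + 1)
              = ζ * ∑ k ∈ Finset.range (K + 1), ζ ^ k := by
            rw [Finset.mul_sum]; exact Finset.sum_congr rfl fun k _ => by ring
          have g1 : ∑ k ∈ Finset.range (K + 1), ζ ^ (k + 1) ≤ ζ / (1 - ζ) := by
            rw [e1]
            calc ζ * ∑ k ∈ Finset.range (K + 1), ζ ^ k
                ≤ ζ * (1 / (1 - ζ)) :=
                  mul_le_mul_of_nonneg_left (geo_bound hζ0 hζ1 _) hζ0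
              _ = ζ / (1 - ζ) := by ring
          have g2 : ∑ k ∈ Finset.range (K + 1), (α k) ^ 2 * ζ ^ (k + 1) ≤ ζ * S2 := by
            rw [hS2, Finset.mul_sum]
            refine Finset.sum_le_sum fun k _ => ?_
            have : ζ ^ (k + 1) ≤ ζ := by
              calc ζ ^ (k + 1) = ζ * ζ ^ k := by ring
                _ ≤ ζ * 1 := mul_le_mul_of_nonneg_left
                    (pow_le_one₀ hζ0 hζ1.le) hζ0
                _ = ζ := mul_one ζ
            calc (α k) ^ 2 * ζ ^ (k + 1) ≤ (α k) ^ 2 * ζ :=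
                mul_le_mul_of_nonneg_left this (sq_nonneg _)
              _ = ζ * (α k) ^ 2 := by ring
          have := mul_le_mul_of_nonneg_left g1 (by norm_num : (0:ℝ) ≤ 1 / 2)
          have := mul_le_mul_of_nonneg_left g2 (by norm_num : (0:ℝ) ≤ 1 / 2)
          have e2 : (1 / 2) * (ζ / (1 - ζ)) = ζ / (2 * (1 - ζ)) := by
            field_simp
          have e3 : (1 / 2) * (ζ * S2) = (ζ / 2) * S2 := by ring
          linarith
  -- Bound for double sum
  have h2 : ∑ k ∈ Finset.range (K + 1), ∑ j ∈ Finset.range (k + 1), α k * α j * ζ ^ (k - j)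
      ≤ (1 / (1 - ζ)) * S2 := by
    have hb : ∀ k ∈ Finset.range (K + 1), ∑ j ∈ Finset.range (k + 1), α k * α j * ζ ^ (k - j)
        ≤ ∑ j ∈ Finset.range (k + 1),
            ((1 / 2) * ((α k) ^ 2 * ζ ^ (k - j)) + (1 / 2) * ((α j) ^ 2 * ζ ^ (k - j))) := by
      intro k _
      refine Finset.sum_le_sum fun j _ => ?_
      have hz : (0:ℝ) ≤ ζ ^ (k - j) := pow_nonneg hζ0 _
      nlinarith [sq_nonneg (α k - α j)]
    have hA : ∑ k ∈ Finset.range (K + 1), ∑ j ∈ Finset.range (k + 1),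
          (α k) ^ 2 * ζ ^ (k - j) ≤ (1 / (1 - ζ)) * S2 := by
      rw [hS2, Finset.mul_sum]
      refine Finset.sum_le_sum fun k _ => ?_
      have e : ∑ j ∈ Finset.range (k + 1), (α k) ^ 2 * ζ ^ (k - j)
          = (α k) ^ 2 * ∑ j ∈ Finset.range (k + 1), ζ ^ (k - j) := by
        rw [Finset.mul_sum]
      have e2 : ∑ j ∈ Finset.range (k + 1), ζ ^ (k - j)
          = ∑ j ∈ Finset.range (k + 1), ζ ^ j := by
        have := Finset.sum_range_reflect (fun i => ζ ^ i) (k + 1)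
        simpa using this
      rw [e, e2]
      calc (α k) ^ 2 * ∑ j ∈ Finset.range (k + 1), ζ ^ j
          ≤ (α k) ^ 2 * (1 / (1 - ζ)) :=
            mul_le_mul_of_nonneg_left (geo_bound hζ0 hζ1 _) (sq_nonneg _)
        _ = (1 / (1 - ζ)) * (α k) ^ 2 := by ring
    have hB' : ∑ k ∈ Finset.range (K + 1), ∑ j ∈ Finset.range (k + 1),
          (α j) ^ 2 * ζ ^ (k - j) ≤ (1 / (1 - ζ)) * S2 := by
      have swap : ∑ k ∈ Finset.range (K + 1), ∑ j ∈ Finset.range (k + 1),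
            (α j) ^ 2 * ζ ^ (k - j)
          = ∑ j ∈ Finset.range (K + 1), ∑ k ∈ Finset.Ico j (K + 1),
            (α j) ^ 2 * ζ ^ (k - j) := by
        simp_rw [← Nat.Ico_zero_eq_range]
        exact (Finset.sum_Ico_Ico_comm 0 (K + 1)
          (fun i j => (α i) ^ 2 * ζ ^ (j - i))).symm
      rw [swap, hS2, Finset.mul_sum]
      refine Finset.sum_le_sum fun j hj => ?_
      have e : ∑ k ∈ Finset.Ico j (K + 1), (α j) ^ 2 * ζ ^ (k - j)
          = (α j) ^ 2 * ∑ k ∈ Finset.Ico j (K + 1), ζ ^ (k - j) := by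
        rw [Finset.mul_sum]
      have e2 : ∑ k ∈ Finset.Ico j (K + 1), ζ ^ (k - j)
          = ∑ m ∈ Finset.range (K + 1 - j), ζ ^ m := by
        rw [Finset.sum_Ico_eq_sum_range]
        exact Finset.sum_congr rfl fun m _ => by rw [Nat.add_sub_cancel_left]
      rw [e, e2]
      calc (α j) ^ 2 * ∑ m ∈ Finset.range (K + 1 - j), ζ ^ m
          ≤ (α j) ^ 2 * (1 / (1 - ζ)) :=
            mul_le_mul_of_nonneg_left (geo_bound hζ0 hζ1 _) (sq_nonneg _)
        _ = (1 / (1 - ζ)) * (α j) ^ 2 := by ring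
    calc ∑ k ∈ Finset.range (K + 1), ∑ j ∈ Finset.range (k + 1), α k * α j * ζ ^ (k - j)
        ≤ ∑ k ∈ Finset.range (K + 1), ∑ j ∈ Finset.range (k + 1),
            ((1 / 2) * ((α k) ^ 2 * ζ ^ (k - j)) + (1 / 2) * ((α j) ^ 2 * ζ ^ (k - j))) :=
          Finset.sum_le_sum hb
      _ ≤ (1 / (1 - ζ)) * S2 := by
          have eA : ∑ k ∈ Finset.range (K + 1), ∑ j ∈ Finset.range (k + 1),
                (1 / 2) * ((α k) ^ 2 * ζ ^ (k - j))
              = (1 / 2) * ∑ k ∈ Finset.range (K + 1), ∑ j ∈ Finset.range (k + 1),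
                (α k) ^ 2 * ζ ^ (k - j) := by
            rw [Finset.mul_sum]
            exact Finset.sum_congr rfl fun k _ => by rw [Finset.mul_sum]
          have eB : ∑ k ∈ Finset.range (K + 1), ∑ j ∈ Finset.range (k + 1),
                (1 / 2) * ((α j) ^ 2 * ζ ^ (k - j))
              = (1 / 2) * ∑ k ∈ Finset.range (K + 1), ∑ j ∈ Finset.range (k + 1),
                (α j) ^ 2 * ζ ^ (k - j) := by
            rw [Finset.mul_sum]
            exact Finset.sum_congr rfl fun k _ => by rw [Finset.mul_sum]
          simp only [Finset.sum_add_distrib]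
          rw [eA, eB]
          linarith
    -- done
  -- Combine
  have hCf0 : 0 ≤ C * f0 := mul_nonneg hC hf0
  have hCB : 0 ≤ C * B := mul_nonneg hC hB
  have t1 := mul_le_mul_of_nonneg_left h1 hCf0
  have t2 := mul_le_mul_of_nonneg_left h2 hCB
  have final : C * f0 * (ζ / (2 * (1 - ζ)) + (ζ / 2) * S2) + C * B * ((1 / (1 - ζ)) * S2)
      = C * f0 * ζ / (2 * (1 - ζ)) + C * (f0 * ζ / 2 + B / (1 - ζ)) * S2 := by ring
  linarith [step1, step2.le, step2.ge]
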